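/- arXiv:2302.07325 — 2 statements merged into one kernel-verified Lean document; each statement's English description precedes it below -/
import Mathlib

section
/- Let β > 0, R > 0, η(x) = (1 − |x|²/(4R²))^β on B_{2R} ⊂ ℝⁿ, and let w : B_{2R} → ℝ be continuous, nonnegative, vanishing on ∂B_{2R} (extended continuously), and set v = η·w for some function w with v differentiable. Suppose x ∈ B_{2R} lies in the upper contact set of v, i.e. v(z) ≤ v(x) + Dv(x)·(z−x) for all z ∈ B_{2R}. Then R η(x)^{1/β} |Dv(x)| ≤ v(x). -/
open scoped BigOperators

/-- Upper contact set gradient bound: with η(x) = (1−|x|²/(4R²))^β and v = η·w, w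
continuous and nonnegative on the closed ball (so v vanishes on ∂B_{2R}), every point x
of the upper contact set of v in B_{2R} satisfies R η(x)^{1/β} |Dv(x)| ≤ v(x). -/
theorem contact_set_gradient_bound
    (n : ℕ) (β R : ℝ) (hβ : 0 < β) (hR : 0 < R)
    (w v : EuclideanSpace ℝ (Fin n) → ℝ)
    (hw : ContinuousOn w (Metric.closedBall 0 (2 * R)))
    (hwnn : ∀ y ∈ Metric.closedBall (0 : EuclideanSpace ℝ (Fin n)) (2 * R), 0 ≤ w y)
    (hv : ∀ y, v y = (1 - ‖y‖ ^ 2 / (4 * R ^ 2)) ^ β * w y)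
    (x : EuclideanSpace ℝ (Fin n))
    (hx : x ∈ Metric.ball (0 : EuclideanSpace ℝ (Fin n)) (2 * R))
    (hvd : DifferentiableAt ℝ v x)
    (hcontact : ∀ z ∈ Metric.ball (0 : EuclideanSpace ℝ (Fin n)) (2 * R),
      v z ≤ v x + fderiv ℝ v x (z - x)) :
    R * (((1 - ‖x‖ ^ 2 / (4 * R ^ 2)) ^ β) ^ (1 / β)) * ‖fderiv ℝ v x‖ ≤ v x := by
  set L := fderiv ℝ v x with hL
  have hnx : ‖x‖ < 2 * R := by simpa using hx
  have hnx0 : (0:ℝ) ≤ ‖x‖ := norm_nonneg x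
  set a : ℝ := 1 - ‖x‖ ^ 2 / (4 * R ^ 2) with ha
  have ha0 : 0 < a := by
    have : ‖x‖ ^ 2 < (2*R)^2 := by nlinarith
    have h4 : 0 < 4 * R ^ 2 := by positivity
    rw [ha]
    rw [sub_pos, div_lt_one h4]
    nlinarith
  -- v nonneg on the open ball
  have hvnn : ∀ y ∈ Metric.ball (0 : EuclideanSpace ℝ (Fin n)) (2 * R), 0 ≤ v y := by
    intro y hy
    have hyc : y ∈ Metric.closedBall (0 : EuclideanSpace ℝ (Fin n)) (2 * R) := Metric.ball_subset_closedBall hy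
    have hny : ‖y‖ ≤ 2 * R := by simpa using hyc
    have hb : (0:ℝ) ≤ 1 - ‖y‖ ^ 2 / (4 * R ^ 2) := by
      have h4 : 0 < 4 * R ^ 2 := by positivity
      rw [sub_nonneg, div_le_one h4]
      nlinarith [norm_nonneg y]
    rw [hv y]
    exact mul_nonneg (Real.rpow_nonneg hb β) (hwnn y hyc)
  have hvx0 : 0 ≤ v x := hvnn x hx
  -- the key claim: for 0 ≤ s < 2R - ‖x‖, s * ‖L‖ ≤ v x
  have key : ∀ s : ℝ, 0 ≤ s → s < 2 * R - ‖x‖ → s * ‖L‖ ≤ v x := by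
    intro s hs0 hs
    by_cases hL0 : L = 0
    · simp [hL0, hvx0]
    · set g : EuclideanSpace ℝ (Fin n) := (InnerProductSpace.toDual ℝ (EuclideanSpace ℝ (Fin n))).symm L with hg
      have hLg : ∀ y, L y = inner ℝ g y := by
        intro y
        have : (InnerProductSpace.toDual ℝ (EuclideanSpace ℝ (Fin n))) g = L :=
          (InnerProductSpace.toDual ℝ (EuclideanSpace ℝ (Fin n))).apply_symm_apply L
        rw [← this]
        rfl
      have hng : ‖g‖ = ‖L‖ := by
        rw [hg]
        exact (InnerProductSpace.toDual ℝ (EuclideanSpace ℝ (Fin n))).symm.norm_map L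
      have hg0 : g ≠ 0 := by
        intro h
        apply hL0
        have : ‖L‖ = 0 := by rw [← hng, h, norm_zero]
        exact norm_eq_zero.mp this
      have hgn : 0 < ‖g‖ := norm_pos_iff.mpr hg0
      set z : EuclideanSpace ℝ (Fin n) := x + s • (-(‖g‖⁻¹ • g)) with hz
      have hzball : z ∈ Metric.ball (0 : EuclideanSpace ℝ (Fin n)) (2 * R) := by
        simp only [Metric.mem_ball, dist_zero_right]
        calc ‖z‖ ≤ ‖x‖ + ‖s • (-(‖g‖⁻¹ • g))‖ := norm_add_le _ _
          _ = ‖x‖ + s * 1 := by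
              rw [norm_smul, norm_neg, norm_smul, norm_inv, norm_norm,
                inv_mul_cancel₀ (ne_of_gt hgn), Real.norm_eq_abs, abs_of_nonneg hs0]
          _ < 2 * R := by linarith
      have hc := hcontact z hzball
      have hzx : z - x = s • (-(‖g‖⁻¹ • g)) := by rw [hz]; abel
      have hLz : L (z - x) = - (s * ‖g‖) := by
        rw [hzx, map_smul, map_neg, map_smul, hLg g, real_inner_self_eq_norm_sq]
        field_simp
        rw [smul_eq_mul, smul_eq_mul, one_div]
        linear_combination (-s * ‖g‖) * inv_mul_cancel₀ hgn.ne'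
      have h0z : 0 ≤ v z := hvnn z hzball
      rw [hLz] at hc
      rw [← hng]
      linarith
  -- deduce (2R - ‖x‖) * ‖L‖ ≤ v x
  have main : (2 * R - ‖x‖) * ‖L‖ ≤ v x := by
    by_contra h
    push_neg at h
    have hLn : 0 ≤ ‖L‖ := norm_nonneg _
    have hLpos : 0 < ‖L‖ := by
      rcases lt_or_eq_of_le hLn with h' | h'
      · exact h'
      · exfalso; rw [← h'] at h; simp at h; linarith
    set c : ℝ := 2 * R - ‖x‖ with hc
    have hcpos : 0 < c := by rw [hc]; linarith
    set s : ℝ := (v x / ‖L‖ + c) / 2 with hs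
    have hdc : v x / ‖L‖ < c := (div_lt_iff₀ hLpos).mpr (by linarith [h])
    have hs0 : 0 ≤ s := by
      have : 0 ≤ v x / ‖L‖ := div_nonneg hvx0 hLn
      rw [hs]; linarith
    have hsc : s < c := by rw [hs]; linarith
    have := key s hs0 (by rw [hc] at hsc; exact hsc)
    have h2 : v x / ‖L‖ < s := by rw [hs]; linarith
    have h3 : v x < s * ‖L‖ := by
      rw [div_lt_iff₀ hLpos] at h2; linarith
    linarith
  -- simplify the rpow
  have hrw : ((1 - ‖x‖ ^ 2 / (4 * R ^ 2)) ^ β) ^ (1 / β) = a := by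
    rw [← ha, ← Real.rpow_mul (le_of_lt ha0), mul_one_div, div_self (ne_of_gt hβ), Real.rpow_one]
  rw [hrw]
  have hRa : R * a ≤ 2 * R - ‖x‖ := by
    rw [ha]
    have h4 : (0:ℝ) < 4 * R ^ 2 := by positivity
    rw [mul_sub, mul_one]
    have : R * (‖x‖ ^ 2 / (4 * R ^ 2)) = ‖x‖^2 / (4 * R) := by
      field_simp
    rw [this]
    have h3 : (0:ℝ) < 4 * R := by linarith
    have hd : ‖x‖ ^ 2 / (4 * R) * (4 * R) = ‖x‖ ^ 2 := div_mul_cancel₀ _ h3.ne'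
    nlinarith [sq_nonneg (‖x‖ - 2 * R)]
  calc R * a * ‖L‖ ≤ (2 * R - ‖x‖) * ‖L‖ :=
        mul_le_mul_of_nonneg_right hRa (norm_nonneg _)
    _ ≤ v x := main
end

section
/- Let A be a symmetric n×n matrix with λ(A) ∈ Γ₂⁺ and let F = σ₁(λ(A))Id − A be the first Newton tensor. Then F ≥ (σ₂(λ(A))/σ₁(λ(A))) · Id as quadratic forms; equivalently, for every unit vector ξ, (Fξ, ξ) ≥ σ₂(λ(A))/σ₁(λ(A)). -/
open scoped BigOperators
open Matrix

/-- For a symmetric matrix A with λ(A) ∈ Γ₂⁺, the first Newton tensor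
F = σ₁(λ(A))Id − A satisfies F ≥ (σ₂/σ₁)·Id: for every unit vector ξ,
⟨Fξ, ξ⟩ ≥ σ₂(λ(A))/σ₁(λ(A)). -/
theorem newton_tensor_lower_bound
    (n : ℕ) (A : Matrix (Fin n) (Fin n) ℝ) (hA : A.IsHermitian)
    (h1 : 0 < ∑ i, hA.eigenvalues i)
    (h2 : 0 < ∑ i, ∑ j, if i < j then hA.eigenvalues i * hA.eigenvalues j else 0) :
    ∀ ξ : Fin n → ℝ, (∑ i, ξ i ^ 2) = 1 →
      (∑ i, ∑ j, if i < j then hA.eigenvalues i * hA.eigenvalues j else 0) /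
          (∑ i, hA.eigenvalues i)
        ≤ ξ ⬝ᵥ (((∑ i, hA.eigenvalues i) • (1 : Matrix (Fin n) (Fin n) ℝ) - A) *ᵥ ξ) := by
  intro ξ hξ
  set l := hA.eigenvalues with hl
  set s := ∑ i, l i with hs
  set σ₂ := ∑ i, ∑ j, if i < j then l i * l j else 0 with hσ₂
  -- Newton identity: s² = ∑ lᵢ² + 2σ₂
  have key : s ^ 2 = (∑ i, l i ^ 2) + 2 * σ₂ := by
    have split : ∀ i j : Fin n, l i * l j =
        (if i < j then l i * l j else 0) + (if j < i then l i * l j else 0)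
          + (if i = j then l i * l j else 0) := by
      intro i j
      rcases lt_trichotomy i j with h | h | h
      · simp [h, h.ne, not_lt.mpr h.le]
      · simp [h]
      · simp [h, h.ne', not_lt.mpr h.le]
    calc s ^ 2 = ∑ i, ∑ j, l i * l j := by
          rw [sq]; exact Finset.sum_mul_sum Finset.univ Finset.univ l l
      _ = ∑ i, ∑ j, ((if i < j then l i * l j else 0) + (if j < i then l i * l j else 0)
          + (if i = j then l i * l j else 0)) :=
          Finset.sum_congr rfl fun i _ => Finset.sum_congr rfl fun j _ => split i j
      _ = (∑ i, ∑ j, if i < j then l i * l j else 0)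
          + (∑ i, ∑ j, if j < i then l i * l j else 0)
          + (∑ i, ∑ j, if i = j then l i * l j else 0) := by
            simp_rw [Finset.sum_add_distrib]
      _ = _ := by
            rw [Finset.sum_comm (s := Finset.univ) (t := Finset.univ)
              (f := fun i j => if j < i then l i * l j else 0)]
            simp_rw [Finset.sum_ite_eq, mul_comm]
            simp [sq]
            ring
  -- pointwise eigenvalue inequality: σ₂/σ₁ ≤ σ₁ - λᵢ
  have hpt : ∀ i, σ₂ / s ≤ s - l i := by
    intro i
    rw [div_le_iff₀ h1]
    have hsq : l i ^ 2 ≤ ∑ j, l j ^ 2 :=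
      Finset.single_le_sum (fun j _ => sq_nonneg (l j)) (Finset.mem_univ i)
    nlinarith [sq_nonneg (s - l i)]
  -- spectral decomposition
  set U := (hA.eigenvectorUnitary : Matrix (Fin n) (Fin n) ℝ) with hU
  set y := star U *ᵥ ξ with hyd
  have hy : star U *ᵥ ξ = ξ ᵥ* U := by
    rw [star_eq_conjTranspose, conjTranspose_eq_transpose_of_trivial, mulVec_transpose]
  have hq : ξ ⬝ᵥ (A *ᵥ ξ) = ∑ i, l i * (y i) ^ 2 := by
    conv_lhs => rw [hA.spectral_theorem, Unitary.conjStarAlgAut_apply]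
    rw [← mulVec_mulVec, ← mulVec_mulVec, dotProduct_mulVec, ← hy]
    simp [dotProduct, mulVec_diagonal, sq, y]
    exact Finset.sum_congr rfl fun i _ => by ring
  have hyy : ∑ i, (y i) ^ 2 = 1 := by
    have : y ⬝ᵥ y = ξ ⬝ᵥ ξ := by
      rw [hyd]
      nth_rewrite 1 [hy]
      rw [← dotProduct_mulVec, mulVec_mulVec, mem_unitaryGroup_iff.mp hA.eigenvectorUnitary.2,
        one_mulVec]
    simpa [dotProduct, sq, hξ] using this.trans (by simpa [dotProduct, sq] using hξ)
  -- assemble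
  have hexp : ξ ⬝ᵥ ((s • (1 : Matrix (Fin n) (Fin n) ℝ) - A) *ᵥ ξ)
      = ∑ i, (y i) ^ 2 * (s - l i) := by
    rw [sub_mulVec, dotProduct_sub, smul_mulVec, one_mulVec, dotProduct_smul, hq]
    have : ξ ⬝ᵥ ξ = 1 := by simpa [dotProduct, sq] using hξ
    have hs1 : s • (1 : ℝ) = ∑ i, (y i) ^ 2 * s := by
      rw [smul_eq_mul, mul_one, ← Finset.sum_mul, hyy, one_mul]
    rw [this, hs1, ← Finset.sum_sub_distrib]
    exact Finset.sum_congr rfl fun i _ => by ring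
  rw [hexp]
  calc σ₂ / s = ∑ i, (y i) ^ 2 * (σ₂ / s) := by rw [← Finset.sum_mul, hyy, one_mul]
    _ ≤ ∑ i, (y i) ^ 2 * (s - l i) :=
        Finset.sum_le_sum fun i _ => mul_le_mul_of_nonneg_left (hpt i) (sq_nonneg (y i))
end
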